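/- For all f, g ∈ Δ_{2,max}, the limits lim_{x→1⁻}[f,g]₂(x) and lim_{x→−1⁺}[f,g]₂(x) exist and are finite. -/

import Mathlib

open MeasureTheory Set Filter

noncomputable section

/-- `f` is locally absolutely continuous on `(-1,1)` with a.e. derivative `f'`,
expressed via the fundamental theorem of calculus. -/
def LocACOn (f f' : ℝ → ℂ) : Prop :=
  ∀ x ∈ Ioo (-1:ℝ) 1, ∀ y ∈ Ioo (-1:ℝ) 1,
    IntervalIntegrable f' volume x y ∧ f y - f x = ∫ t in x..y, f' t

/-- membership in `L²(-1,1)` -/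
def L2I (g : ℝ → ℂ) : Prop :=
  MemLp g 2 (volume.restrict (Ioo (-1:ℝ) 1))

/-- the Legendre expression `ℓ[f] = -((1-x²)f′)′ = -(1-x²)f″ + 2x f′`. -/
def leg (f1 f2 : ℝ → ℂ) (x : ℝ) : ℂ :=
  ((2*x : ℝ) : ℂ) * f1 x - ((1 - x^2 : ℝ) : ℂ) * f2 x

/-- the derivative `(ℓ[f])′ = 2f′ + 4x f″ - (1-x²)f‴`. -/
def legD (f1 f2 f3 : ℝ → ℂ) (x : ℝ) : ℂ :=
  (2 : ℂ) * f1 x + ((4*x : ℝ) : ℂ) * f2 x - ((1 - x^2 : ℝ) : ℂ) * f3 x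

/-- the second derivative `(ℓ[f])″ = 6f″ + 6x f‴ - (1-x²)f⁗`. -/
def legDD (f2 f3 f4 : ℝ → ℂ) (x : ℝ) : ℂ :=
  (6 : ℂ) * f2 x + ((6*x : ℝ) : ℂ) * f3 x - ((1 - x^2 : ℝ) : ℂ) * f4 x

/-- `ℓ²[f] = ((1-x²)²f″)″ - 2((1-x²)f′)′
           = (1-x²)²f⁗ - 8x(1-x²)f‴ + (14x²-6)f″ + 4x f′`. -/
def legSq (f1 f2 f3 f4 : ℝ → ℂ) (x : ℝ) : ℂ :=
  (((1 - x^2)^2 : ℝ) : ℂ) * f4 x - ((8*x*(1 - x^2) : ℝ) : ℂ) * f3 x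
    + ((14*x^2 - 6 : ℝ) : ℂ) * f2 x + ((4*x : ℝ) : ℂ) * f1 x

/-- `((1-x²)²f″)′ = (1-x²)²f‴ - 4x(1-x²)f″`. -/
def sqTermD (f2 f3 : ℝ → ℂ) (x : ℝ) : ℂ :=
  (((1 - x^2)^2 : ℝ) : ℂ) * f3 x - ((4*x*(1 - x^2) : ℝ) : ℂ) * f2 x

/-- `[f,1]₂(x) = ((1-x²)²f″)′ - 2(1-x²)f′`. -/
def bket1 (f1 f2 f3 : ℝ → ℂ) (x : ℝ) : ℂ :=
  sqTermD f2 f3 x - ((2*(1 - x^2) : ℝ) : ℂ) * f1 x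

/-- `[f,x]₂(x) = x[f,1]₂(x) - (1-x²)²f″ + 2(1-x²)f`. -/
def bketX (f f1 f2 f3 : ℝ → ℂ) (x : ℝ) : ℂ :=
  (x : ℂ) * bket1 f1 f2 f3 x - (((1 - x^2)^2 : ℝ) : ℂ) * f2 x
    + ((2*(1 - x^2) : ℝ) : ℂ) * f x

/-- the maximal domain `Δ_{2,max}` of `ℓ²` in `L²(-1,1)`:
`f, f′, f″, f‴` locally absolutely continuous and `f, ℓ²[f] ∈ L²(-1,1)`. -/
def Delta2Max (f f1 f2 f3 f4 : ℝ → ℂ) : Prop :=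
  LocACOn f f1 ∧ LocACOn f1 f2 ∧ LocACOn f2 f3 ∧ LocACOn f3 f4 ∧
    L2I f ∧ L2I (legSq f1 f2 f3 f4)

/-- the filter `x → 1⁻` from within `(-1,1)`. -/
def atOne : Filter ℝ := nhdsWithin 1 (Ioo (-1:ℝ) 1)

/-- the filter `x → -1⁺` from within `(-1,1)`. -/
def atNegOne : Filter ℝ := nhdsWithin (-1) (Ioo (-1:ℝ) 1)

/-- the GKN domain `D(S)`. -/
def DS (f f1 f2 f3 f4 : ℝ → ℂ) : Prop :=
  Delta2Max f f1 f2 f3 f4 ∧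
  Tendsto (bket1 f1 f2 f3) atOne (nhds 0) ∧
  Tendsto (bket1 f1 f2 f3) atNegOne (nhds 0) ∧
  Tendsto (bketX f f1 f2 f3) atOne (nhds 0) ∧
  Tendsto (bketX f f1 f2 f3) atNegOne (nhds 0)

/-- the maximal domain `Δ_{1,max}` of `ℓ` in `L²(-1,1)`. -/
def Delta1Max (f f1 f2 : ℝ → ℂ) : Prop :=
  LocACOn f f1 ∧ LocACOn f1 f2 ∧ L2I f ∧ L2I (leg f1 f2)

/-- the domain `D(A)` of the Legendre polynomials operator. -/
def DA (f f1 f2 : ℝ → ℂ) : Prop :=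
  Delta1Max f f1 f2 ∧
  Tendsto (fun x => ((1 - x^2 : ℝ) : ℂ) * f1 x) atOne (nhds 0) ∧
  Tendsto (fun x => ((1 - x^2 : ℝ) : ℂ) * f1 x) atNegOne (nhds 0)

/-- the algebraic domain `D(A²) = {f ∈ D(A) : ℓ[f] ∈ D(A)}`. -/
def DA2 (f f1 f2 f3 f4 : ℝ → ℂ) : Prop :=
  DA f f1 f2 ∧ DA (leg f1 f2) (legD f1 f2 f3) (legDD f2 f3 f4)

/-- the full sesquilinear form `[f,g]₂(x)` associated with `ℓ²` via Green's formula: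
`[f,g]₂ = ((1-x²)²f″)′ ḡ − ((1-x²)²ḡ″)′ f − (1-x²)²f″ḡ′ + (1-x²)²f′ḡ″ − 2(1-x²)f′ḡ + 2(1-x²)fḡ′`. -/
def bket2 (f f1 f2 f3 g g1 g2 g3 : ℝ → ℂ) (x : ℝ) : ℂ :=
  sqTermD f2 f3 x * star (g x) - star (sqTermD g2 g3 x) * f x
    - (((1 - x^2)^2 : ℝ) : ℂ) * f2 x * star (g1 x)
    + (((1 - x^2)^2 : ℝ) : ℂ) * f1 x * star (g2 x)
    - ((2*(1 - x^2) : ℝ) : ℂ) * f1 x * star (g x)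
    + ((2*(1 - x^2) : ℝ) : ℂ) * f x * star (g1 x)


section Aux

private lemma memI_zero : (0:ℝ) ∈ Ioo (-1:ℝ) 1 := by norm_num

private lemma Icc_subset_I {x y : ℝ} (hx : x ∈ Ioo (-1:ℝ) 1) (hy : y ∈ Ioo (-1:ℝ) 1) :
    Icc x y ⊆ Ioo (-1:ℝ) 1 := fun t ht =>
  ⟨lt_of_lt_of_le hx.1 ht.1, lt_of_le_of_lt ht.2 hy.2⟩

private lemma uIcc_subset_I {x y : ℝ} (hx : x ∈ Ioo (-1:ℝ) 1) (hy : y ∈ Ioo (-1:ℝ) 1) :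
    uIcc x y ⊆ Ioo (-1:ℝ) 1 := by
  intro t ht
  rw [Set.mem_uIcc] at ht
  rcases ht with ⟨h1, h2⟩ | ⟨h1, h2⟩
  · exact ⟨lt_of_lt_of_le hx.1 h1, lt_of_le_of_lt h2 hy.2⟩
  · exact ⟨lt_of_lt_of_le hy.1 h1, lt_of_le_of_lt h2 hx.2⟩

lemma LocACOn.continuousOn {u u' : ℝ → ℂ} (h : LocACOn u u') :
    ContinuousOn u (Ioo (-1:ℝ) 1) := by
  intro a ha
  have hb : (-1 + a)/2 ∈ Ioo (-1:ℝ) 1 := ⟨by linarith [ha.1, ha.2], by linarith [ha.1, ha.2]⟩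
  have hc : (a + 1)/2 ∈ Ioo (-1:ℝ) 1 := ⟨by linarith [ha.1, ha.2], by linarith [ha.1, ha.2]⟩
  have hba : (-1 + a)/2 < a := by linarith [ha.1]
  have hac : a < (a + 1)/2 := by linarith [ha.2]
  have hbc : (-1 + a)/2 ≤ (a + 1)/2 := le_of_lt (hba.trans hac)
  have hint : IntervalIntegrable u' volume ((-1 + a)/2) ((a + 1)/2) := (h _ hb _ hc).1
  have hcont : ContinuousOn (fun t => u ((-1 + a)/2) + ∫ s in ((-1 + a)/2)..t, u' s)
      (uIcc ((-1 + a)/2) ((a + 1)/2)) :=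
    continuousOn_const.add (intervalIntegral.continuousOn_primitive_interval' hint left_mem_uIcc)
  have hEq : EqOn u (fun t => u ((-1 + a)/2) + ∫ s in ((-1 + a)/2)..t, u' s)
      (uIcc ((-1 + a)/2) ((a + 1)/2)) := by
    intro t ht
    rw [uIcc_of_le hbc] at ht
    have h2 := (h _ hb t (Icc_subset_I hb hc ht)).2
    show u t = u ((-1 + a)/2) + ∫ s in ((-1 + a)/2)..t, u' s
    rw [← h2]; ring
  have hnhds : uIcc ((-1 + a)/2) ((a + 1)/2) ∈ nhds a := by
    rw [uIcc_of_le hbc]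
    exact Icc_mem_nhds hba hac
  exact ((hcont.congr hEq).continuousAt hnhds).continuousWithinAt

private lemma tri_swap {a b : ℝ} {U V : ℝ → ℂ} (hU : IntegrableOn U (Ioc a b) volume)
    (hV : IntegrableOn V (Ioc a b) volume) :
    ∫ t in Ioc a b, U t * ∫ s in Ioc a t, V s
      = ∫ s in Ioc a b, (∫ t in Ioc s b, U t) * V s := by
  have hS : MeasurableSet {p : ℝ × ℝ | p.2 ≤ p.1} :=
    measurableSet_le measurable_snd measurable_fst
  have hF : Integrable ({p : ℝ × ℝ | p.2 ≤ p.1}.indicator (fun p : ℝ × ℝ => U p.1 * V p.2))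
      ((volume.restrict (Ioc a b)).prod (volume.restrict (Ioc a b))) :=
    (hU.mul_prod hV).indicator hS
  have step1 : ∫ t in Ioc a b, U t * ∫ s in Ioc a t, V s
      = ∫ t in Ioc a b, (∫ s in Ioc a b,
        {p : ℝ × ℝ | p.2 ≤ p.1}.indicator (fun p : ℝ × ℝ => U p.1 * V p.2) (t, s)) := by
    refine integral_congr_ae ?_
    filter_upwards [ae_restrict_mem measurableSet_Ioc] with t ht
    have hpt : ∀ s : ℝ, {p : ℝ × ℝ | p.2 ≤ p.1}.indicator (fun p : ℝ × ℝ => U p.1 * V p.2) (t, s)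
        = U t * (Iic t).indicator V s := by
      intro s
      by_cases hs : s ≤ t
      · rw [Set.indicator_of_mem (by exact hs : (t, s) ∈ {p : ℝ × ℝ | p.2 ≤ p.1}),
          Set.indicator_of_mem (by exact hs : s ∈ Iic t)]
      · rw [Set.indicator_of_notMem (by exact hs : (t, s) ∉ {p : ℝ × ℝ | p.2 ≤ p.1}),
          Set.indicator_of_notMem (by exact hs : s ∉ Iic t), mul_zero]
    have hseteq : Iic t ∩ Ioc a b = Ioc a t := by
      ext z
      simp only [mem_inter_iff, mem_Iic, mem_Ioc]
      constructor
      · rintro ⟨h1, h2, h3⟩; exact ⟨h2, h1⟩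
      · rintro ⟨h1, h2⟩; exact ⟨h2, h1, h2.trans ht.2⟩
    simp only [hpt]
    rw [integral_const_mul, integral_indicator measurableSet_Iic,
      Measure.restrict_restrict measurableSet_Iic, hseteq]
  have step3 : ∫ s in Ioc a b, (∫ t in Ioc a b,
        {p : ℝ × ℝ | p.2 ≤ p.1}.indicator (fun p : ℝ × ℝ => U p.1 * V p.2) (t, s))
      = ∫ s in Ioc a b, (∫ t in Ioc s b, U t) * V s := by
    refine integral_congr_ae ?_
    filter_upwards [ae_restrict_mem measurableSet_Ioc] with s hs
    have hpt : ∀ t : ℝ, {p : ℝ × ℝ | p.2 ≤ p.1}.indicator (fun p : ℝ × ℝ => U p.1 * V p.2) (t, s)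
        = (Ici s).indicator U t * V s := by
      intro t
      by_cases hts : s ≤ t
      · rw [Set.indicator_of_mem (by exact hts : (t, s) ∈ {p : ℝ × ℝ | p.2 ≤ p.1}),
          Set.indicator_of_mem (by exact hts : t ∈ Ici s)]
      · rw [Set.indicator_of_notMem (by exact hts : (t, s) ∉ {p : ℝ × ℝ | p.2 ≤ p.1}),
          Set.indicator_of_notMem (by exact hts : t ∉ Ici s), zero_mul]
    have hseteq : Ici s ∩ Ioc a b = Icc s b := by
      ext z
      simp only [mem_inter_iff, mem_Ici, mem_Ioc, mem_Icc]
      constructor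
      · rintro ⟨h1, h2, h3⟩; exact ⟨h1, h3⟩
      · rintro ⟨h1, h2⟩; exact ⟨h1, lt_of_lt_of_le hs.1 h1, h2⟩
    simp only [hpt]
    rw [integral_mul_const, integral_indicator measurableSet_Ici,
      Measure.restrict_restrict measurableSet_Ici, hseteq, integral_Icc_eq_integral_Ioc]
  rw [step1]
  have swap := MeasureTheory.integral_integral_swap
    (f := fun t s => {p : ℝ × ℝ | p.2 ≤ p.1}.indicator (fun p : ℝ × ℝ => U p.1 * V p.2) (t, s))
    (μ := volume.restrict (Ioc a b)) (ν := volume.restrict (Ioc a b)) hF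
  rw [swap]
  exact step3

private lemma locACOn_mul_ordered {u u' v v' : ℝ → ℂ} (hu : LocACOn u u') (hv : LocACOn v v')
    {x y : ℝ} (hx : x ∈ Ioo (-1:ℝ) 1) (hy : y ∈ Ioo (-1:ℝ) 1) (hxy : x ≤ y) :
    u y * v y - u x * v x = ∫ t in Ioc x y, (u' t * v t + u t * v' t) := by
  have hIcc : Icc x y ⊆ Ioo (-1:ℝ) 1 := Icc_subset_I hx hy
  have hu'xy : IntervalIntegrable u' volume x y := (hu x hx y hy).1
  have hv'xy : IntervalIntegrable v' volume x y := (hv x hx y hy).1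
  have hu'Ioc : IntegrableOn u' (Ioc x y) volume :=
    (intervalIntegrable_iff_integrableOn_Ioc_of_le hxy).1 hu'xy
  have hv'Ioc : IntegrableOn v' (Ioc x y) volume :=
    (intervalIntegrable_iff_integrableOn_Ioc_of_le hxy).1 hv'xy
  have hu'Icc : IntegrableOn u' (Icc x y) volume :=
    (intervalIntegrable_iff_integrableOn_Icc_of_le hxy).1 hu'xy
  have hv'Icc : IntegrableOn v' (Icc x y) volume :=
    (intervalIntegrable_iff_integrableOn_Icc_of_le hxy).1 hv'xy
  have hAc : ContinuousOn (fun t => ∫ s in Ioc x t, u' s) (Icc x y) :=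
    intervalIntegral.continuousOn_primitive hu'Icc
  have hBc : ContinuousOn (fun t => ∫ s in Ioc x t, v' s) (Icc x y) :=
    intervalIntegral.continuousOn_primitive hv'Icc
  have hut : ∀ t, t ∈ Ioo (-1:ℝ) 1 → x ≤ t → u t = u x + ∫ s in Ioc x t, u' s := by
    intro t ht hxt
    have h2 := (hu x hx t ht).2
    rw [intervalIntegral.integral_of_le hxt] at h2
    rw [← h2]; ring
  have hvt : ∀ t, t ∈ Ioo (-1:ℝ) 1 → x ≤ t → v t = v x + ∫ s in Ioc x t, v' s := by
    intro t ht hxt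
    have h2 := (hv x hx t ht).2
    rw [intervalIntegral.integral_of_le hxt] at h2
    rw [← h2]; ring
  have hi1 : IntegrableOn (fun t => u' t * v x) (Ioc x y) volume := hu'Ioc.mul_const _
  have hi2 : IntegrableOn (fun t => u' t * ∫ s in Ioc x t, v' s) (Ioc x y) volume :=
    hu'Ioc.mul_continuousOn_of_subset hBc measurableSet_Ioc isCompact_Icc Ioc_subset_Icc_self
  have hi3 : IntegrableOn (fun t => u x * v' t) (Ioc x y) volume := hv'Ioc.const_mul _
  have hi4 : IntegrableOn (fun t => (∫ s in Ioc x t, u' s) * v' t) (Ioc x y) volume :=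
    IntegrableOn.continuousOn_mul_of_subset hAc hv'Ioc isCompact_Icc measurableSet_Ioc
      Ioc_subset_Icc_self
  have key : ∫ t in Ioc x y, (u' t * v t + u t * v' t)
      = ∫ t in Ioc x y, ((u' t * v x + u' t * ∫ s in Ioc x t, v' s)
          + (u x * v' t + (∫ s in Ioc x t, u' s) * v' t)) := by
    refine setIntegral_congr_fun measurableSet_Ioc ?_
    intro t ht
    have htI : t ∈ Ioo (-1:ℝ) 1 := hIcc ⟨le_of_lt ht.1, ht.2⟩
    show u' t * v t + u t * v' t
        = (u' t * v x + u' t * ∫ s in Ioc x t, v' s)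
          + (u x * v' t + (∫ s in Ioc x t, u' s) * v' t)
    rw [hut t htI (le_of_lt ht.1), hvt t htI (le_of_lt ht.1)]
    ring
  have e1 : ∫ t in Ioc x y, u' t * v x = (∫ t in Ioc x y, u' t) * v x :=
    integral_mul_const _ _
  have e3 : ∫ t in Ioc x y, u x * v' t = u x * ∫ t in Ioc x y, v' t :=
    integral_const_mul _ _
  have e2 : ∫ t in Ioc x y, (u' t * ∫ s in Ioc x t, v' s)
      = (∫ t in Ioc x y, u' t) * (∫ t in Ioc x y, v' t)
        - ∫ t in Ioc x y, (∫ s in Ioc x t, u' s) * v' t := by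
    rw [tri_swap hu'Ioc hv'Ioc]
    have hpt : ∀ s ∈ Ioc x y, (∫ t in Ioc s y, u' t) * v' s
        = (∫ t in Ioc x y, u' t) * v' s - (∫ t in Ioc x s, u' t) * v' s := by
      intro s hs
      have hxs : IntervalIntegrable u' volume x s := by
        apply hu'xy.mono_set
        rw [uIcc_of_le hxy, uIcc_of_le (le_of_lt hs.1)]
        exact Icc_subset_Icc le_rfl hs.2
      have hsub := intervalIntegral.integral_interval_sub_left hu'xy hxs
      rw [intervalIntegral.integral_of_le hxy, intervalIntegral.integral_of_le (le_of_lt hs.1),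
        intervalIntegral.integral_of_le hs.2] at hsub
      rw [← hsub]; ring
    rw [setIntegral_congr_fun measurableSet_Ioc hpt]
    rw [integral_sub (hv'Ioc.const_mul _) hi4, integral_const_mul]
  have hi12 : IntegrableOn (fun t => u' t * v x + u' t * ∫ s in Ioc x t, v' s)
      (Ioc x y) volume := hi1.add hi2
  have hi34 : IntegrableOn (fun t => u x * v' t + (∫ s in Ioc x t, u' s) * v' t)
      (Ioc x y) volume := hi3.add hi4
  rw [key, integral_add hi12 hi34, integral_add hi1 hi2, integral_add hi3 hi4,
    e1, e2, e3, hut y hy hxy, hvt y hy hxy]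
  ring

lemma LocACOn.mul {u u' v v' : ℝ → ℂ} (hu : LocACOn u u') (hv : LocACOn v v') :
    LocACOn (fun x => u x * v x) (fun x => u' x * v x + u x * v' x) := by
  intro x hx y hy
  have hsub : uIcc x y ⊆ Ioo (-1:ℝ) 1 := uIcc_subset_I hx hy
  constructor
  · exact ((hu x hx y hy).1.mul_continuousOn (hv.continuousOn.mono hsub)).add
      ((hv x hx y hy).1.continuousOn_mul (hu.continuousOn.mono hsub))
  · rcases le_total x y with h | h
    · rw [intervalIntegral.integral_of_le h]
      exact locACOn_mul_ordered hu hv hx hy h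
    · rw [intervalIntegral.integral_of_ge h]
      have := locACOn_mul_ordered hu hv hy hx h
      rw [← this]; ring

lemma LocACOn.add' {u u' v v' : ℝ → ℂ} (hu : LocACOn u u') (hv : LocACOn v v') :
    LocACOn (fun x => u x + v x) (fun x => u' x + v' x) := by
  intro x hx y hy
  obtain ⟨hui, hue⟩ := hu x hx y hy
  obtain ⟨hvi, hve⟩ := hv x hx y hy
  refine ⟨hui.add hvi, ?_⟩
  rw [intervalIntegral.integral_add hui hvi, ← hue, ← hve]
  ring

lemma LocACOn.sub' {u u' v v' : ℝ → ℂ} (hu : LocACOn u u') (hv : LocACOn v v') :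
    LocACOn (fun x => u x - v x) (fun x => u' x - v' x) := by
  intro x hx y hy
  obtain ⟨hui, hue⟩ := hu x hx y hy
  obtain ⟨hvi, hve⟩ := hv x hx y hy
  refine ⟨hui.sub hvi, ?_⟩
  rw [intervalIntegral.integral_sub hui hvi, ← hue, ← hve]
  ring

private lemma integrable_star {f : ℝ → ℂ} {μ : Measure ℝ} (h : Integrable f μ) :
    Integrable (fun x => star (f x)) μ :=
  Integrable.mono h (RCLike.continuous_conj.comp_aestronglyMeasurable h.1)
    (Eventually.of_forall fun x => by simp)

lemma LocACOn.star' {u u' : ℝ → ℂ} (h : LocACOn u u') :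
    LocACOn (fun x => star (u x)) (fun x => star (u' x)) := by
  intro x hx y hy
  obtain ⟨hui, hue⟩ := h x hx y hy
  refine ⟨⟨integrable_star hui.1, integrable_star hui.2⟩, ?_⟩
  have : ∫ t in x..y, star (u' t) = star (∫ t in x..y, u' t) := by
    simp only [intervalIntegral, RCLike.star_def]
    rw [integral_conj, integral_conj, map_sub]
  rw [this, ← hue, ← star_sub]

lemma LocACOn.congr' {F G F' G' : ℝ → ℂ} (h : LocACOn F F') (hFG : ∀ x, F x = G x)
    (hD : ∀ x, F' x = G' x) : LocACOn G G' := by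
  have e1 : F = G := funext hFG
  have e2 : F' = G' := funext hD
  exact e1 ▸ e2 ▸ h

private lemma locACOn_poly {p p' : ℝ → ℝ} (hd : ∀ x, HasDerivAt p (p' x) x)
    (hc : Continuous p') :
    LocACOn (fun x => ((p x : ℝ) : ℂ)) (fun x => ((p' x : ℝ) : ℂ)) := by
  intro x hx y hy
  have hci : IntervalIntegrable (fun t => ((p' t : ℝ) : ℂ)) volume x y :=
    (Complex.continuous_ofReal.comp hc).intervalIntegrable x y
  refine ⟨hci, ?_⟩
  rw [intervalIntegral.integral_eq_sub_of_hasDerivAt (fun t _ => (hd t).ofReal_comp) hci]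

private lemma poly_c2 : LocACOn (fun x : ℝ => (((1 - x^2)^2 : ℝ) : ℂ))
    (fun x : ℝ => ((-(4*x*(1 - x^2)) : ℝ) : ℂ)) := by
  apply locACOn_poly
  · intro x
    have h1 : HasDerivAt (fun x : ℝ => 1 - x^2) (-(2*x)) x := by
      simpa using ((hasDerivAt_pow 2 x).const_sub 1)
    have := h1.pow 2
    refine this.congr_deriv ?_
    simp
    ring
  · continuity

private lemma poly_c4 : LocACOn (fun x : ℝ => ((4*x*(1 - x^2) : ℝ) : ℂ))
    (fun x : ℝ => ((4 - 12*x^2 : ℝ) : ℂ)) := by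
  apply locACOn_poly
  · intro x
    have ha : HasDerivAt (fun x : ℝ => 4*x) 4 x := by
      simpa using (hasDerivAt_id x).const_mul (4:ℝ)
    have hb : HasDerivAt (fun x : ℝ => 1 - x^2) (-(2*x)) x := by
      simpa using ((hasDerivAt_pow 2 x).const_sub 1)
    have h1 := ha.mul hb
    refine h1.congr_deriv ?_
    ring
  · continuity

private lemma poly_c1 : LocACOn (fun x : ℝ => ((2*(1 - x^2) : ℝ) : ℂ))
    (fun x : ℝ => ((-(4*x) : ℝ) : ℂ)) := by
  apply locACOn_poly
  · intro x
    have hb : HasDerivAt (fun x : ℝ => 1 - x^2) (-(2*x)) x := by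
      simpa using ((hasDerivAt_pow 2 x).const_sub 1)
    have := hb.const_mul (2:ℝ)
    refine this.congr_deriv ?_
    ring
  · continuity

lemma locACOn_bket2 {f f1 f2 f3 f4 g g1 g2 g3 g4 : ℝ → ℂ}
    (hf : Delta2Max f f1 f2 f3 f4) (hg : Delta2Max g g1 g2 g3 g4) :
    LocACOn (bket2 f f1 f2 f3 g g1 g2 g3)
      (fun x => legSq f1 f2 f3 f4 x * star (g x) - f x * star (legSq g1 g2 g3 g4 x)) := by
  obtain ⟨hf0, hf1, hf2, hf3, -, -⟩ := hf
  obtain ⟨hg0, hg1, hg2, hg3, -, -⟩ := hg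
  have hg0s := hg0.star'
  have hg1s := hg1.star'
  have hg2s := hg2.star'
  have hg3s := hg3.star'
  have t1 := ((poly_c2.mul hf3).sub' (poly_c4.mul hf2)).mul hg0s
  have t2 := (((poly_c2.mul hg3).sub' (poly_c4.mul hg2)).star').mul hf0
  have t3 := (poly_c2.mul hf2).mul hg1s
  have t4 := (poly_c2.mul hf1).mul hg2s
  have t5 := (poly_c1.mul hf1).mul hg0s
  have t6 := (poly_c1.mul hf0).mul hg1s
  have big := ((((t1.sub' t2).sub' t3).add' t4).sub' t5).add' t6
  refine big.congr' ?_ ?_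
  · intro x
    simp only [bket2, sqTermD, star_sub, star_add, star_mul', RCLike.star_def,
      Complex.conj_ofReal]
    all_goals push_cast
    all_goals ring
  · intro x
    simp only [legSq, star_sub, star_add, star_mul', RCLike.star_def, Complex.conj_ofReal]
    all_goals push_cast
    all_goals ring

private lemma L2I_star {u : ℝ → ℂ} (h : L2I u) : L2I (fun x => star (u x)) := by
  refine ⟨RCLike.continuous_conj.comp_aestronglyMeasurable h.1, ?_⟩
  have heq : eLpNorm (fun x => star (u x)) 2 (volume.restrict (Ioo (-1:ℝ) 1))
      = eLpNorm u 2 (volume.restrict (Ioo (-1:ℝ) 1)) := by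
    rw [← eLpNorm_norm (fun x => star (u x))]
    simp only [norm_star]
    exact eLpNorm_norm u
  rw [heq]
  exact h.2

private lemma l2_mul_integrableOn {u v : ℝ → ℂ} (hu : L2I u) (hv : L2I v) :
    IntegrableOn (fun x => u x * v x) (Ioo (-1:ℝ) 1) volume := by
  have h1 : (1:ENNReal)/1 = 1/2 + 1/2 := by
    rw [ENNReal.add_halves, div_one]
  have hmem : MemLp (u • v) 1 (volume.restrict (Ioo (-1:ℝ) 1)) := MemLp.smul hv hu
  have := memLp_one_iff_integrable.mp hmem
  exact this

end Aux

/-- For all `f, g ∈ Δ_{2,max}`, the limits `lim_{x→1⁻}[f,g]₂(x)` and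
`lim_{x→-1⁺}[f,g]₂(x)` exist and are finite. -/
theorem bket2_limits_exist (f f1 f2 f3 f4 g g1 g2 g3 g4 : ℝ → ℂ)
    (hf : Delta2Max f f1 f2 f3 f4) (hg : Delta2Max g g1 g2 g3 g4) :
    (∃ L : ℂ, Tendsto (bket2 f f1 f2 f3 g g1 g2 g3) atOne (nhds L)) ∧
    (∃ L : ℂ, Tendsto (bket2 f f1 f2 f3 g g1 g2 g3) atNegOne (nhds L)) := by
  have hF := locACOn_bket2 hf hg
  set h : ℝ → ℂ := fun x => legSq f1 f2 f3 f4 x * star (g x)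
      - f x * star (legSq g1 g2 g3 g4 x) with hh
  have hInt : IntegrableOn h (Ioo (-1:ℝ) 1) volume :=
    (l2_mul_integrableOn hf.2.2.2.2.2 (L2I_star hg.2.2.2.2.1)).sub
      (l2_mul_integrableOn hf.2.2.2.2.1 (L2I_star hg.2.2.2.2.2))
  have hII : IntervalIntegrable h volume (-1) 1 := by
    rw [intervalIntegrable_iff_integrableOn_Ioc_of_le (by norm_num : (-1:ℝ) ≤ 1)]
    exact hInt.congr_set_ae Ioo_ae_eq_Ioc.symm
  have hprim : ContinuousOn (fun r => ∫ t in (0:ℝ)..r, h t) (Icc (-1:ℝ) 1) := by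
    have h0 : (0:ℝ) ∈ uIcc (-1:ℝ) 1 := by
      rw [uIcc_of_le (by norm_num : (-1:ℝ) ≤ 1)]
      constructor <;> norm_num
    have := intervalIntegral.continuousOn_primitive_interval' hII h0
    rwa [uIcc_of_le (by norm_num : (-1:ℝ) ≤ 1)] at this
  have hrep : ∀ r ∈ Ioo (-1:ℝ) 1, bket2 f f1 f2 f3 g g1 g2 g3 r
      = bket2 f f1 f2 f3 g g1 g2 g3 0 + ∫ t in (0:ℝ)..r, h t := by
    intro r hr
    have := (hF 0 memI_zero r hr).2
    rw [← this]
    ring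
  have hmemIoo : Ioo (-1:ℝ) 1 ∈ atOne := self_mem_nhdsWithin
  have hmemIoo' : Ioo (-1:ℝ) 1 ∈ atNegOne := self_mem_nhdsWithin
  constructor
  · refine ⟨bket2 f f1 f2 f3 g g1 g2 g3 0 + ∫ t in (0:ℝ)..1, h t, ?_⟩
    have hc1 : ContinuousWithinAt (fun r => ∫ t in (0:ℝ)..r, h t) (Icc (-1:ℝ) 1) 1 :=
      hprim 1 (by constructor <;> norm_num)
    have hmono : atOne ≤ nhdsWithin 1 (Icc (-1:ℝ) 1) :=
      nhdsWithin_mono 1 Ioo_subset_Icc_self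
    have htend : Tendsto (fun r => bket2 f f1 f2 f3 g g1 g2 g3 0 + ∫ t in (0:ℝ)..r, h t) atOne
        (nhds (bket2 f f1 f2 f3 g g1 g2 g3 0 + ∫ t in (0:ℝ)..1, h t)) :=
      tendsto_const_nhds.add (hc1.mono_left hmono)
    refine htend.congr' ?_
    filter_upwards [hmemIoo] with r hr
    exact (hrep r hr).symm
  · refine ⟨bket2 f f1 f2 f3 g g1 g2 g3 0 + ∫ t in (0:ℝ)..(-1:ℝ), h t, ?_⟩
    have hc1 : ContinuousWithinAt (fun r => ∫ t in (0:ℝ)..r, h t) (Icc (-1:ℝ) 1) (-1) :=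
      hprim (-1) (by constructor <;> norm_num)
    have hmono : atNegOne ≤ nhdsWithin (-1) (Icc (-1:ℝ) 1) :=
      nhdsWithin_mono (-1) Ioo_subset_Icc_self
    have htend : Tendsto (fun r => bket2 f f1 f2 f3 g g1 g2 g3 0 + ∫ t in (0:ℝ)..r, h t) atNegOne
        (nhds (bket2 f f1 f2 f3 g g1 g2 g3 0 + ∫ t in (0:ℝ)..(-1:ℝ), h t)) :=
      tendsto_const_nhds.add (hc1.mono_left hmono)
    refine htend.congr' ?_
    filter_upwards [hmemIoo'] with r hr
    exact (hrep r hr).symm
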